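/- Let G be a finite Abelian group and q a probability distribution on G with q(g) > 0 for all g ∈ G. For every ε > 0 there exists δ > 0 such that: if A and N are independent G-valued random variables with N distributed according to q, and H(A) ≤ log|G| − ε, then H(A + N) ≥ H(A) + δ. -/
import Mathlib


open MeasureTheory

/-- Shannon entropy of a random variable taking values in a finite set. -/
noncomputable def rvEntropy {Ω : Type*} [MeasurableSpace Ω] (μ : Measure Ω)
    {S : Type*} [Fintype S] (A : Ω → S) : ℝ :=
  ∑ a : S, Real.negMulLog ((μ (A ⁻¹' {a})).toReal)

section Aux

variable {G : Type*} [Fintype G] [AddCommGroup G]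

/-- Entropy of a distribution on `G`. -/
noncomputable def distEnt (p : G → ℝ) : ℝ := ∑ a : G, Real.negMulLog (p a)

/-- Convolution of two distributions on `G`. -/
noncomputable def distConv (q p : G → ℝ) : G → ℝ := fun a => ∑ g : G, q g * p (a - g)

lemma sum_shift (p : G → ℝ) (g : G) :
    ∑ a : G, Real.negMulLog (p (a - g)) = distEnt p := by
  exact Fintype.sum_equiv (Equiv.subRight g) _ _ (fun a => rfl)

lemma double_sum_eq (q p : G → ℝ) (hq1 : ∑ g : G, q g = 1) :
    ∑ a : G, ∑ g : G, q g * Real.negMulLog (p (a - g)) = distEnt p := by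
  rw [Finset.sum_comm]
  calc ∑ g : G, ∑ a : G, q g * Real.negMulLog (p (a - g))
      = ∑ g : G, q g * distEnt p := by
        refine Finset.sum_congr rfl fun g _ => ?_
        rw [← Finset.mul_sum, sum_shift]
    _ = distEnt p := by rw [← Finset.sum_mul, hq1, one_mul]

lemma jensen_term (q p : G → ℝ) (hq0 : ∀ g, 0 < q g) (hq1 : ∑ g : G, q g = 1)
    (hp0 : ∀ a, 0 ≤ p a) (a : G) :
    ∑ g : G, q g * Real.negMulLog (p (a - g)) ≤ Real.negMulLog (distConv q p a) := by
  have h := Real.concaveOn_negMulLog.le_map_sum (t := Finset.univ)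
    (w := q) (p := fun g => p (a - g)) (fun g _ => (hq0 g).le) hq1
    (fun g _ => hp0 (a - g))
  simpa [smul_eq_mul, distConv] using h

lemma jensen_term_strict (q p : G → ℝ) (hq0 : ∀ g, 0 < q g) (hq1 : ∑ g : G, q g = 1)
    (hp0 : ∀ a, 0 ≤ p a) {x y : G} (hxy : p x ≠ p y) :
    ∑ g : G, q g * Real.negMulLog (p (x - g)) < Real.negMulLog (distConv q p x) := by
  have h := Real.strictConcaveOn_negMulLog.lt_map_sum (t := Finset.univ)
    (w := q) (p := fun g => p (x - g)) (fun g _ => hq0 g) hq1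
    (fun g _ => hp0 (x - g))
    ⟨0, Finset.mem_univ _, x - y, Finset.mem_univ _, by
      simpa [sub_sub_cancel] using hxy⟩
  simpa [smul_eq_mul, distConv] using h

/-- Strict entropy gain under convolution for non-constant `p`. -/
lemma distEnt_lt_distEnt_conv (q p : G → ℝ) (hq0 : ∀ g, 0 < q g)
    (hq1 : ∑ g : G, q g = 1) (hp0 : ∀ a, 0 ≤ p a)
    {x y : G} (hxy : p x ≠ p y) :
    distEnt p < distEnt (distConv q p) := by
  rw [← double_sum_eq q p hq1]
  refine Finset.sum_lt_sum (fun a _ => jensen_term q p hq0 hq1 hp0 a)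
    ⟨x, Finset.mem_univ _, jensen_term_strict q p hq0 hq1 hp0 hxy⟩

lemma distEnt_const (c : ℝ) :
    distEnt (fun _ : G => c) = (Fintype.card G : ℝ) * Real.negMulLog c := by
  simp [distEnt, Finset.sum_const, Finset.card_univ, nsmul_eq_mul]

/-- The key deterministic statement with a uniform `δ`. -/
lemma exists_delta (q : G → ℝ) (hq0 : ∀ g, 0 < q g) (hq1 : ∑ g : G, q g = 1)
    {ε : ℝ} (hε : 0 < ε) :
    ∃ δ > (0 : ℝ), ∀ p : G → ℝ, (∀ a, 0 ≤ p a) → (∑ a : G, p a) = 1 →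
      distEnt p ≤ Real.log (Fintype.card G) - ε →
      distEnt p + δ ≤ distEnt (distConv q p) := by
  classical
  set c : ℝ := Real.log (Fintype.card G) - ε with hc
  set K : Set (G → ℝ) :=
    {p | (∀ a, 0 ≤ p a) ∧ (∑ a : G, p a) = 1 ∧ distEnt p ≤ c} with hK
  have hcontEnt : Continuous (distEnt (G := G)) := by
    apply continuous_finset_sum
    exact fun a _ => Real.continuous_negMulLog.comp (continuous_apply a)
  have hcontConv : Continuous (fun p : G → ℝ => distEnt (distConv q p)) := by
    apply continuous_finset_sum
    intro a _
    refine Real.continuous_negMulLog.comp ?_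
    exact continuous_finset_sum _ fun g _ => (continuous_const.mul (continuous_apply (a - g)))
  have hf : Continuous (fun p : G → ℝ => distEnt (distConv q p) - distEnt p) :=
    hcontConv.sub hcontEnt
  by_cases hne : K.Nonempty
  · -- compactness
    have hclosed : IsClosed K := by
      have : K = (⋂ a : G, {p : G → ℝ | 0 ≤ p a}) ∩
          ({p : G → ℝ | (∑ a : G, p a) = 1} ∩ {p : G → ℝ | distEnt p ≤ c}) := by
        ext p; simp [hK, Set.mem_iInter, and_assoc]
      rw [this]
      refine IsClosed.inter (isClosed_iInter fun a =>
        isClosed_le continuous_const (continuous_apply a)) (IsClosed.inter ?_ ?_)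
      · exact isClosed_eq (continuous_finset_sum _ fun a _ => continuous_apply a)
          continuous_const
      · exact isClosed_le hcontEnt continuous_const
    have hsub : K ⊆ Set.pi Set.univ (fun _ : G => Set.Icc (0 : ℝ) 1) := by
      intro p hp
      obtain ⟨hp0, hp1, _⟩ := hp
      intro a _
      refine ⟨hp0 a, ?_⟩
      calc p a ≤ ∑ b : G, p b :=
            Finset.single_le_sum (fun b _ => hp0 b) (Finset.mem_univ a)
        _ = 1 := hp1
    have hcompact : IsCompact K :=
      IsCompact.of_isClosed_subset
        (isCompact_univ_pi fun _ => isCompact_Icc) hclosed hsub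
    obtain ⟨p₀, hp₀K, hmin'⟩ := hcompact.exists_isMinOn hne hf.continuousOn
    have hmin := isMinOn_iff.mp hmin'
    obtain ⟨hp₀0, hp₀1, hp₀c⟩ := hp₀K
    -- p₀ is not constant
    have hcard : (0 : ℝ) < (Fintype.card G : ℝ) := by
      exact_mod_cast Fintype.card_pos
    have hnc : ∃ x y : G, p₀ x ≠ p₀ y := by
      by_contra h
      push_neg at h
      have hconst : p₀ = fun _ => p₀ 0 := funext fun a => h a 0
      have hsum : (Fintype.card G : ℝ) * p₀ 0 = 1 := by
        rw [← hp₀1]; rw [hconst]; simp [Finset.sum_const, Finset.card_univ, nsmul_eq_mul]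
      have hval : p₀ 0 = (Fintype.card G : ℝ)⁻¹ := by
        field_simp at hsum ⊢; linarith [hsum]
      have hEnt : distEnt p₀ = Real.log (Fintype.card G) := by
        rw [hconst, distEnt_const, hval]
        rw [Real.negMulLog, Real.log_inv]
        field_simp
      rw [hEnt] at hp₀c
      rw [hc] at hp₀c
      linarith
    obtain ⟨x, y, hxy⟩ := hnc
    have hδpos : 0 < distEnt (distConv q p₀) - distEnt p₀ :=
      sub_pos.mpr (distEnt_lt_distEnt_conv q p₀ hq0 hq1 hp₀0 hxy)
    refine ⟨distEnt (distConv q p₀) - distEnt p₀, hδpos, ?_⟩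
    intro p hp0 hp1 hpc
    have := hmin p ⟨hp0, hp1, hpc⟩
    linarith
  · refine ⟨1, one_pos, ?_⟩
    intro p hp0 hp1 hpc
    exact absurd ⟨hp0, hp1, hpc⟩ (fun h => hne ⟨p, h⟩)

end Aux

/-- Let `G` be a finite Abelian group and `q` a fully supported probability
distribution on `G`.  For every `ε > 0` there is a `δ > 0` such that: whenever
`A` and `N` are independent `G`-valued random variables with `N` distributed
according to `q`, and `H(A) ≤ log |G| − ε`, then `H(A + N) ≥ H(A) + δ`. -/
theorem entropy_add_gain {G : Type*} [Fintype G] [AddCommGroup G]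
    [MeasurableSpace G] [MeasurableSingletonClass G]
    (q : G → ℝ) (hq0 : ∀ g, 0 < q g) (hq1 : ∑ g, q g = 1)
    {ε : ℝ} (hε : 0 < ε) :
    ∃ δ > (0 : ℝ),
      ∀ (Ω : Type) (mΩ : MeasurableSpace Ω) (μ : Measure Ω),
        IsProbabilityMeasure μ →
        ∀ A N : Ω → G, Measurable A → Measurable N →
          ProbabilityTheory.IndepFun A N μ →
          (∀ g, (μ (N ⁻¹' {g})).toReal = q g) →
          rvEntropy μ A ≤ Real.log (Fintype.card G) - ε →
          rvEntropy μ A + δ ≤ rvEntropy μ (fun ω => A ω + N ω) := by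
  classical
  obtain ⟨δ, hδpos, hδ⟩ := exists_delta q hq0 hq1 hε
  refine ⟨δ, hδpos, ?_⟩
  intro Ω mΩ μ hprob A N hA hN hindep hNq hE
  set p : G → ℝ := fun a => (μ (A ⁻¹' {a})).toReal with hp
  have hfin : ∀ (s : Set Ω), μ s ≠ ⊤ := fun s => (measure_lt_top μ s).ne
  have hp0 : ∀ a, 0 ≤ p a := fun a => ENNReal.toReal_nonneg
  have hp1 : (∑ a : G, p a) = 1 := by
    rw [hp]
    rw [← ENNReal.toReal_sum (fun a _ => hfin _)]
    rw [MeasureTheory.sum_measure_preimage_singleton _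
      (fun a _ => hA (measurableSet_singleton a))]
    simp
  have hEA : rvEntropy μ A = distEnt p := rfl
  -- distribution of the sum
  have hsumdist : ∀ g : G,
      (μ ((fun ω => A ω + N ω) ⁻¹' {g})).toReal = distConv q p g := by
    intro g
    have hset : (fun ω => A ω + N ω) ⁻¹' {g}
        = ⋃ a : G, (A ⁻¹' {a} ∩ N ⁻¹' {g - a}) := by
      ext ω
      simp only [Set.mem_preimage, Set.mem_singleton_iff, Set.mem_iUnion, Set.mem_inter_iff]
      constructor
      · intro h
        exact ⟨A ω, rfl, by rw [← h]; abel⟩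
      · rintro ⟨a, h1, h2⟩
        rw [h1, h2]; abel
    have hdisj : Pairwise (Function.onFun Disjoint
        (fun a : G => A ⁻¹' {a} ∩ N ⁻¹' {g - a})) := by
      intro a b hab
      refine Set.disjoint_left.mpr ?_
      rintro ω ⟨ha, _⟩ ⟨hb, _⟩
      exact hab (ha.symm.trans hb)
    have hmeas : ∀ a : G, MeasurableSet (A ⁻¹' {a} ∩ N ⁻¹' {g - a}) :=
      fun a => (hA (measurableSet_singleton a)).inter (hN (measurableSet_singleton _))
    rw [hset, measure_iUnion hdisj hmeas]
    rw [tsum_fintype]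
    have hterm : ∀ a : G, μ (A ⁻¹' {a} ∩ N ⁻¹' {g - a})
        = μ (A ⁻¹' {a}) * μ (N ⁻¹' {g - a}) := fun a =>
      hindep.measure_inter_preimage_eq_mul _ _
        (measurableSet_singleton a) (measurableSet_singleton _)
    rw [Finset.sum_congr rfl (fun a _ => hterm a)]
    rw [ENNReal.toReal_sum (fun a _ => by
      exact ENNReal.mul_ne_top (hfin _) (hfin _))]
    have : ∀ a : G, (μ (A ⁻¹' {a}) * μ (N ⁻¹' {g - a})).toReal
        = p a * q (g - a) := by
      intro a
      rw [ENNReal.toReal_mul, hNq (g - a)]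
    rw [Finset.sum_congr rfl (fun a _ => this a)]
    rw [distConv]
    exact Fintype.sum_equiv (Equiv.subLeft g) _ _
      (fun a => by simp [sub_sub_cancel, mul_comm])
  have hEAN : rvEntropy μ (fun ω => A ω + N ω) = distEnt (distConv q p) := by
    unfold rvEntropy distEnt
    exact Finset.sum_congr rfl fun g _ => by rw [hsumdist g]
  rw [hEA, hEAN]
  exact hδ p hp0 hp1 (hEA ▸ hE)
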